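/- Fix a positive integer ρ and set α_n = β_{(n,ρn)} for n ≥ 1. Then α_{n+m} ≥ α_n · α_m for all positive integers n and m (the sequence is supermultiplicative). -/

import Mathlib

open MeasureTheory Filter

/-- An edge of the square lattice `ℤ × ℤ`, encoded by its lower-left endpoint `base`
together with its direction: a horizontal edge joins `base` to `base + (1,0)`,
a vertical edge joins `base` to `base + (0,1)`. This encodes exactly the set
`𝔼` of nearest-neighbour edges of `ℤ²`. -/
structure LatticeEdge where
  base : ℤ × ℤ
  horiz : Bool
deriving DecidableEq

namespace LatticeEdge

/-- First endpoint of an edge. -/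
def fst (e : LatticeEdge) : ℤ × ℤ := e.base

/-- Second endpoint of an edge. -/
def snd (e : LatticeEdge) : ℤ × ℤ :=
  if e.horiz then (e.base.1 + 1, e.base.2) else (e.base.1, e.base.2 + 1)

/-- The two endpoints of an edge, as an unordered pair. -/
def ends (e : LatticeEdge) : Sym2 (ℤ × ℤ) := s(e.fst, e.snd)

end LatticeEdge

/-- The graph on `ℤ²` whose edges are the lattice edges belonging to `S`. -/
def graphOf (S : Set LatticeEdge) : SimpleGraph (ℤ × ℤ) where
  Adj u v := u ≠ v ∧ ∃ e ∈ S, e.ends = s(u, v)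
  symm := by
    constructor
    intro u v h
    obtain ⟨hne, e, he, hs⟩ := h
    exact ⟨hne.symm, e, he, hs.trans (Sym2.eq_swap)⟩
  loopless := by
    constructor
    intro u h
    exact h.1 rfl

/-- The graph `(ℤ², 𝔼 ∖ γ)` obtained by deleting the edges of `γ`. -/
def complGraph (γ : Finset LatticeEdge) : SimpleGraph (ℤ × ℤ) :=
  graphOf {e | e ∉ γ}

/-- A finite set `γ` of lattice edges is a *contour* if the graph `(ℤ², 𝔼 ∖ γ)` has
exactly one finite connected component, and `γ` is minimal with this property:
for every `e ∈ γ`, the graph `(ℤ², 𝔼 ∖ (γ ∖ {e}))` has no finite connected component. -/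
def IsContour (γ : Finset LatticeEdge) : Prop :=
  (∃! C : (complGraph γ).ConnectedComponent, C.supp.Finite) ∧
  ∀ e ∈ γ, ∀ C : (graphOf {f | f ∉ γ ∨ f = e}).ConnectedComponent, ¬ C.supp.Finite

/-- A contour `γ` *surrounds* a set `X ⊆ ℤ²` of vertices if `X` is contained in the
vertex set `I_γ` of the (unique) finite connected component of `(ℤ², 𝔼 ∖ γ)`. -/
def Surrounds (γ : Finset LatticeEdge) (X : Set (ℤ × ℤ)) : Prop :=
  IsContour γ ∧ ∃ C : (complGraph γ).ConnectedComponent, C.supp.Finite ∧ X ⊆ C.supp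

/-- `Γ^n_X` : the set of contours of cardinality `n` surrounding `X`. -/
def GammaN (X : Set (ℤ × ℤ)) (n : ℕ) : Set (Finset LatticeEdge) :=
  {γ | Surrounds γ X ∧ γ.card = n}

/-- `‖x‖ = 2(x₁ + x₂ + 2)`, the cardinality of a minimal contour surrounding `{0, x}`. -/
def normC (x : ℤ × ℤ) : ℕ := (2 * (x.1 + x.2 + 2)).toNat

/-- `β_x` : the number of minimal contours surrounding `{0, x}`. -/
noncomputable def betaX (x : ℤ × ℤ) : ℕ := Nat.card ↥(GammaN {0, x} (normC x))

/-- Number of horizontal edges of `γ`, i.e. `|γ ∩ 𝔼ʰ|`. -/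
def hCount (γ : Finset LatticeEdge) : ℕ := (γ.filter fun e => e.horiz = true).card

/-- Number of vertical edges of `γ`, i.e. `|γ ∩ 𝔼ᵛ|`. -/
def vCount (γ : Finset LatticeEdge) : ℕ := (γ.filter fun e => e.horiz = false).card

/-- The dual edge `e*` of a lattice edge `e`.  We identify the dual lattice
`ℤ² + (1/2, 1/2)` with `ℤ²` via `(a,b) ↦ (a + 1/2, b + 1/2)`; under this
identification the dual edge crossing the horizontal edge `(a,b)–(a+1,b)` joins
`(a, b-1)` to `(a, b)` (a vertical dual edge), and the dual edge crossing the
vertical edge `(a,b)–(a,b+1)` joins `(a-1, b)` to `(a, b)` (a horizontal dual edge). -/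
def dualEdge (e : LatticeEdge) : LatticeEdge :=
  if e.horiz then ⟨(e.base.1, e.base.2 - 1), false⟩ else ⟨(e.base.1 - 1, e.base.2), true⟩

/-- A finite set `S` of (dual) lattice edges is a *circuit* if it is the edge set of a
closed self-avoiding path: there are `n ≥ 3` distinct vertices `c 0, …, c (n-1)`,
cyclically consecutive ones being joined by an edge of `S`, and every edge of `S` arising
this way. -/
def IsCircuit (S : Finset LatticeEdge) : Prop :=
  ∃ n : ℕ, 3 ≤ n ∧ ∃ c : ZMod n → ℤ × ℤ, Function.Injective c ∧
    (∀ i : ZMod n, ∃ e ∈ S, e.ends = s(c i, c (i + 1))) ∧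
    (∀ e ∈ S, ∃ i : ZMod n, e.ends = s(c i, c (i + 1)))

/-- The dual edge `e_k*` joining `(k - 1/2, -1/2)` to `(k - 1/2, 1/2)`; in our
identification of the dual lattice with `ℤ²` this is the vertical dual edge with base
`(k-1, -1)`, i.e. the dual of the horizontal edge `(k-1, 0)–(k, 0)`. -/
def ekStar (k : ℤ) : LatticeEdge := ⟨(k - 1, -1), false⟩

/-- The probability that the edge `e` is open: `p_h` for horizontal edges and `p_v`
for vertical ones. -/
noncomputable def edgeProb (ph pv : ℝ) (e : LatticeEdge) : ℝ := if e.horiz then ph else pv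

/-- `P` is the Bernoulli product measure `P_{(p_h, p_v)}` on configurations
`ω ∈ {0,1}^𝔼` (encoded as `LatticeEdge → Bool`, `true` = open): it is a probability
measure and, for every finite set of edges, the states of those edges are independent
Bernoulli variables with the correct parameters.  These cylinder probabilities
characterize the product measure uniquely. -/
def IsBernoulliProduct (ph pv : ℝ) (P : Measure (LatticeEdge → Bool)) : Prop :=
  IsProbabilityMeasure P ∧
    ∀ (F : Finset LatticeEdge) (σ : LatticeEdge → Bool),
      P {ω | ∀ e ∈ F, ω e = σ e} =
        ∏ e ∈ F, ENNReal.ofReal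
          (if σ e then edgeProb ph pv e else 1 - edgeProb ph pv e)

/-- The graph of open edges of the configuration `ω`. -/
def openGraph (ω : LatticeEdge → Bool) : SimpleGraph (ℤ × ℤ) :=
  graphOf {e | ω e = true}

/-- `x` and `y` belong to the same finite open cluster of the configuration `ω`. -/
def SameFiniteCluster (ω : LatticeEdge → Bool) (x y : ℤ × ℤ) : Prop :=
  ∃ C : (openGraph ω).ConnectedComponent, x ∈ C.supp ∧ y ∈ C.supp ∧ C.supp.Finite

/-- The truncated (finite) connectivity `τ^f_p(x,y)`: the probability that `x` and `y`
belong to the same finite open cluster. -/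
noncomputable def tauF (P : Measure (LatticeEdge → Bool)) (x y : ℤ × ℤ) : ℝ :=
  (P {ω | SameFiniteCluster ω x y}).toReal

/-- The box `V_N = ([-N,N] × [-N,N]) ∩ ℤ²`. -/
def VN (N : ℕ) : Set (ℤ × ℤ) := {v | |v.1| ≤ (N : ℤ) ∧ |v.2| ≤ (N : ℤ)}

/-- The interior vertex boundary `∂_v^int V_N = {x ∈ V_N : d(x, ℤ² ∖ V_N) = 1}`. -/
def intBdry (N : ℕ) : Set (ℤ × ℤ) :=
  {v | (|v.1| ≤ (N : ℤ) ∧ |v.2| ≤ (N : ℤ)) ∧ (|v.1| = (N : ℤ) ∨ |v.2| = (N : ℤ))}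

/-- `e ∈ E_N`: both endpoints of `e` lie in `V_N`. -/
def edgeInBox (N : ℕ) (e : LatticeEdge) : Prop := e.fst ∈ VN N ∧ e.snd ∈ VN N

/-- The graph on `(V_N, open edges of E_N)` (vertices outside `V_N` are isolated). -/
def openGraphN (N : ℕ) (ω : LatticeEdge → Bool) : SimpleGraph (ℤ × ℤ) :=
  graphOf {e | edgeInBox N e ∧ ω e = true}

/-- The finite-volume event defining `τ^{f,N}_p(x,y)`: there is an open cluster `A` of
`(V_N, open edges of E_N)` with `{x,y} ⊆ V_A` and `V_A ∩ ∂_v^int V_N = ∅`. -/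
def FiniteVolEvent (N : ℕ) (x y : ℤ × ℤ) (ω : LatticeEdge → Bool) : Prop :=
  ∃ C : (openGraphN N ω).ConnectedComponent,
    x ∈ C.supp ∧ y ∈ C.supp ∧ C.supp ∩ intBdry N = ∅

/-- The finite-volume finite connectivity `τ^{f,N}_p(x,y)`. -/
noncomputable def tauFN (P : Measure (LatticeEdge → Bool)) (N : ℕ) (x y : ℤ × ℤ) : ℝ :=
  (P {ω | FiniteVolEvent N x y ω}).toReal

/-- `λ = (1-p)/p`. -/
noncomputable def lam (p : ℝ) : ℝ := (1 - p) / p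

/-- The threshold `η̃(p_h, x₁, x₂)` from the paper. -/
noncomputable def etaTilde (ph : ℝ) (x1 x2 : ℤ) : ℝ :=
  ((betaX (x1, x2) : ℝ) * ph ^ (4 * (x1 + x2 + 2)) /
      ((4 ^ 3 * lam ph) ^ (x1 + x2 + 3) / (1 - 4 ^ 3 * lam ph) +
        (betaX (x1, x2) : ℝ) * (1 + 12 * lam ph) ^ (2 * (x1 + x2 + 2)))) ^
    (1 / (2 * ((x2 : ℝ) - (x1 : ℝ))))
namespace BetaSuper
open Finset

abbrev Pt := ℤ × ℤ

def hE (p : Pt) : LatticeEdge := ⟨p, true⟩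
def vE (p : Pt) : LatticeEdge := ⟨p, false⟩

@[simp] lemma hE_fst (p : Pt) : (hE p).fst = p := rfl
@[simp] lemma hE_snd (p : Pt) : (hE p).snd = (p.1 + 1, p.2) := rfl
@[simp] lemma vE_fst (p : Pt) : (vE p).fst = p := rfl
@[simp] lemma vE_snd (p : Pt) : (vE p).snd = (p.1, p.2 + 1) := rfl

lemma edge_cases (e : LatticeEdge) : e = hE e.base ∨ e = vE e.base := by
  cases e with
  | mk b h => cases h <;> simp [hE, vE]

lemma fst_ne_snd (e : LatticeEdge) : e.fst ≠ e.snd := by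
  rcases edge_cases e with h | h <;> rw [h] <;>
    simp [Prod.ext_iff] <;> omega

def edgesAt (p : Pt) : Finset LatticeEdge :=
  {hE p, vE p, hE (p.1 - 1, p.2), vE (p.1, p.2 - 1)}

def EB (I : Finset Pt) : Finset LatticeEdge :=
  (I.biUnion edgesAt).filter fun e => (e.fst ∈ I ∧ e.snd ∉ I) ∨ (e.snd ∈ I ∧ e.fst ∉ I)

lemma mem_edgesAt_fst (e : LatticeEdge) : e ∈ edgesAt e.fst := by
  obtain ⟨b, h⟩ := e
  cases h <;> simp [edgesAt, hE, vE, LatticeEdge.fst]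

lemma mem_edgesAt_snd (e : LatticeEdge) : e ∈ edgesAt e.snd := by
  obtain ⟨⟨b1, b2⟩, h⟩ := e
  cases h <;> simp [edgesAt, hE, vE, LatticeEdge.snd]

lemma mem_EB {I : Finset Pt} {e : LatticeEdge} :
    e ∈ EB I ↔ ((e.fst ∈ I ∧ e.snd ∉ I) ∨ (e.snd ∈ I ∧ e.fst ∉ I)) := by
  constructor
  · exact fun h => (mem_filter.1 h).2
  · intro h
    refine mem_filter.2 ⟨?_, h⟩
    rcases h with ⟨h1, _⟩ | ⟨h1, _⟩
    · exact mem_biUnion.2 ⟨e.fst, h1, mem_edgesAt_fst e⟩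
    · exact mem_biUnion.2 ⟨e.snd, h1, mem_edgesAt_snd e⟩

lemma not_mem_EB_of_both {I : Finset Pt} {e : LatticeEdge}
    (h : (e.fst ∈ I ↔ e.snd ∈ I)) : e ∉ EB I := by
  rw [mem_EB]; tauto

lemma graphOf_mono {S T : Set LatticeEdge} (h : S ⊆ T) : graphOf S ≤ graphOf T := by
  intro u v hadj
  obtain ⟨hne, e, he, hev⟩ := hadj
  exact ⟨hne, e, h he, hev⟩

lemma ends_eq_iff {e : LatticeEdge} {u v : Pt} :
    e.ends = s(u, v) ↔ (e.fst = u ∧ e.snd = v) ∨ (e.fst = v ∧ e.snd = u) :=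
  Sym2.eq_iff

lemma step_of_adj {S : Set LatticeEdge} {u v : Pt} (h : (graphOf S).Adj u v) :
    (v.1 = u.1 + 1 ∧ v.2 = u.2) ∨ (v.1 = u.1 ∧ v.2 = u.2 + 1) ∨
    (u.1 = v.1 + 1 ∧ u.2 = v.2) ∨ (u.1 = v.1 ∧ u.2 = v.2 + 1) := by
  obtain ⟨hne, e, he, hev⟩ := h
  rcases ends_eq_iff.1 hev with ⟨h1, h2⟩ | ⟨h1, h2⟩ <;>
  rcases edge_cases e with hc | hc <;>
    rw [hc] at h1 h2 <;>
    simp only [hE_fst, hE_snd, vE_fst, vE_snd] at h1 h2 <;>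
    subst h1 <;> subst h2 <;> simp

lemma adj_of_edge {S : Set LatticeEdge} {e : LatticeEdge} (he : e ∈ S) :
    (graphOf S).Adj e.fst e.snd := ⟨fst_ne_snd e, e, he, rfl⟩



open Finset

/-- Sets of edges compatible with `EB I`: contain at least the complement of `EB I`. -/
def Compat (I : Finset Pt) (S : Set LatticeEdge) : Prop := ∀ e, e ∉ EB I → e ∈ S

lemma compat_compl (I : Finset Pt) : Compat I {e | e ∉ EB I} := fun _ h => h

lemma compat_min (I : Finset Pt) (e₀ : LatticeEdge) :
    Compat I {f | f ∉ EB I ∨ f = e₀} := fun _ h => Or.inl h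

variable {I : Finset Pt} {S : Set LatticeEdge}

lemma adj_up (hC : Compat I S) {a c : ℤ}
    (h : ((a, c) ∈ I ↔ (a, c + 1) ∈ I)) : (graphOf S).Adj (a, c) (a, c + 1) := by
  have hne : ((a, c) : Pt) ≠ (a, c + 1) := by simp [Prod.ext_iff]
  refine ⟨hne, vE (a, c), hC _ (not_mem_EB_of_both ?_), rfl⟩
  simpa using h

lemma adj_right (hC : Compat I S) {a c : ℤ}
    (h : ((a, c) ∈ I ↔ (a + 1, c) ∈ I)) : (graphOf S).Adj (a, c) (a + 1, c) := by
  have hne : ((a, c) : Pt) ≠ (a + 1, c) := by simp [Prod.ext_iff]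
  refine ⟨hne, hE (a, c), hC _ (not_mem_EB_of_both ?_), rfl⟩
  simpa using h

/-- Horizontal segment inside `I`. -/
lemma reach_row_in (hC : Compat I S) {j : ℤ} :
    ∀ (k : ℕ) (a : ℤ), (∀ t, a ≤ t → t ≤ a + k → (t, j) ∈ I) →
      (graphOf S).Reachable (a, j) (a + k, j) := by
  intro k
  induction k with
  | zero => intro a _; simp
  | succ n ih =>
    intro a hall
    have h1 : (graphOf S).Adj (a, j) (a + 1, j) := by
      refine adj_right hC (iff_of_true (hall a le_rfl (by push_cast; omega)) ?_)
      exact hall (a + 1) (by omega) (by push_cast; omega)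
    have h2 : (graphOf S).Reachable (a + 1, j) ((a + 1) + n, j) := by
      refine ih (a + 1) fun t ht1 ht2 => hall t (by omega) (by push_cast at ht2 ⊢; omega)
    have h3 : ((a + 1) + (n : ℤ), j) = (a + ((n : ℕ) + 1 : ℕ), j) := by
      simp [Prod.ext_iff]; push_cast; ring
    exact (h1.reachable.trans (h3 ▸ h2))

/-- Vertical segment inside `I`. -/
lemma reach_col_in (hC : Compat I S) {a : ℤ} :
    ∀ (k : ℕ) (c : ℤ), (∀ t, c ≤ t → t ≤ c + k → (a, t) ∈ I) →
      (graphOf S).Reachable (a, c) (a, c + k) := by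
  intro k
  induction k with
  | zero => intro c _; simp
  | succ n ih =>
    intro c hall
    have h1 : (graphOf S).Adj (a, c) (a, c + 1) := by
      refine adj_up hC (iff_of_true (hall c le_rfl (by push_cast; omega)) ?_)
      exact hall (c + 1) (by omega) (by push_cast; omega)
    have h2 : (graphOf S).Reachable (a, c + 1) (a, (c + 1) + n) :=
      ih (c + 1) fun t ht1 ht2 => hall t (by omega) (by push_cast at ht2 ⊢; omega)
    have h3 : (a, (c + 1) + (n : ℤ)) = (a, c + ((n : ℕ) + 1 : ℕ)) := by
      simp [Prod.ext_iff]; push_cast; ring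
    exact (h1.reachable.trans (h3 ▸ h2))

/-- Upward ray outside `I`. -/
lemma reach_col_up_out (hC : Compat I S) {a c : ℤ}
    (h : ∀ t, c ≤ t → (a, t) ∉ I) :
    ∀ k : ℕ, (graphOf S).Reachable (a, c) (a, c + k) := by
  intro k
  induction k with
  | zero => simp
  | succ n ih =>
    have h1 : (graphOf S).Adj (a, c + n) (a, c + n + 1) := by
      refine adj_up hC (iff_of_false (h _ (by omega)) (h _ (by omega)))
    have h3 : (a, (c + n) + 1) = (a, c + ((n : ℕ) + 1 : ℕ)) := by
      simp [Prod.ext_iff]; push_cast; ring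
    exact ih.trans (h3 ▸ h1.reachable)

/-- Downward ray outside `I`. -/
lemma reach_col_down_out (hC : Compat I S) {a c : ℤ}
    (h : ∀ t, t ≤ c → (a, t) ∉ I) :
    ∀ k : ℕ, (graphOf S).Reachable (a, c) (a, c - k) := by
  intro k
  induction k with
  | zero => simp
  | succ n ih =>
    have h1 : (graphOf S).Adj (a, c - n - 1) (a, c - n - 1 + 1) := by
      refine adj_up hC (iff_of_false (h _ (by omega)) (h _ (by omega)))
    have h3 : (a, c - n - 1 + 1) = (a, c - (n : ℤ)) := by simp
    have h4 : (a, c - ((n : ℕ) + 1 : ℕ)) = (a, c - n - 1) := by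
      simp [Prod.ext_iff]; push_cast; ring
    exact h4 ▸ (ih.trans (h3 ▸ h1.reachable).symm)

lemma supp_infinite_of_ray {G : SimpleGraph Pt} {v : Pt} (f : ℕ → Pt)
    (hf : Function.Injective f) (h : ∀ k, G.Reachable v (f k)) :
    (G.connectedComponentMk v).supp.Infinite := by
  refine Set.infinite_of_injective_forall_mem hf fun k => ?_
  exact (SimpleGraph.ConnectedComponent.mem_supp_iff _ _).2
    (SimpleGraph.ConnectedComponent.sound (h k).symm)

/-- Column convexity of `I`. -/
def ColConv (I : Finset Pt) : Prop :=
  ∀ i a b c : ℤ, (i, a) ∈ I → (i, b) ∈ I → a ≤ c → c ≤ b → (i, c) ∈ I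

/-- From any point outside `I`, the connected component is infinite. -/
lemma outside_infinite (hC : Compat I S) (hconv : ColConv I) {q : Pt} (hq : q ∉ I) :
    ((graphOf S).connectedComponentMk q).supp.Infinite := by
  by_cases hd : ∃ t, t ≤ q.2 ∧ (q.1, t) ∈ I
  · -- everything above q is out of I
    have hup : ∀ t, q.2 ≤ t → (q.1, t) ∉ I := by
      intro t ht htI
      obtain ⟨t0, ht0, ht0I⟩ := hd
      exact hq (by simpa using hconv q.1 t0 t q.2 ht0I htI ht0 ht)
    refine supp_infinite_of_ray (fun k => (q.1, q.2 + k)) ?_ ?_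
    · intro k1 k2 hk; simp [Prod.ext_iff] at hk; omega
    · intro k
      have := reach_col_up_out hC hup k
      simpa using this
  · push_neg at hd
    have hdn : ∀ t, t ≤ q.2 → (q.1, t) ∉ I := fun t ht => hd t ht
    refine supp_infinite_of_ray (fun k => (q.1, q.2 - k)) ?_ ?_
    · intro k1 k2 hk; simp [Prod.ext_iff] at hk; omega
    · intro k
      have := reach_col_down_out hC hdn k
      simpa using this

lemma walk_closed {G : SimpleGraph Pt} {P : Pt → Prop}
    (hcl : ∀ u v, G.Adj u v → P u → P v) :
    ∀ {u v : Pt}, G.Walk u v → P u → P v := by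
  intro u v w
  induction w with
  | nil => exact id
  | cons h _ ih => exact fun hu => ih (hcl _ _ h hu)

lemma reachable_closed {G : SimpleGraph Pt} {P : Pt → Prop}
    (hcl : ∀ u v, G.Adj u v → P u → P v) {u v : Pt}
    (h : G.Reachable u v) (hu : P u) : P v := by
  obtain ⟨w⟩ := h
  exact walk_closed hcl w hu


/-- The structure of the interior of a minimal contour surrounding `{0, x}`. -/
structure Good (x : Pt) (I : Finset Pt) : Prop where
  subset : ∀ p ∈ I, 0 ≤ p.1 ∧ p.1 ≤ x.1 ∧ 0 ≤ p.2 ∧ p.2 ≤ x.2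
  zero : ((0, 0) : Pt) ∈ I
  xmem : x ∈ I
  rowConv : ∀ j a b c : ℤ, (a, j) ∈ I → (b, j) ∈ I → a ≤ c → c ≤ b → (c, j) ∈ I
  colConv : ColConv I
  rowNE : ∀ j, 0 ≤ j → j ≤ x.2 → ∃ i, (i, j) ∈ I
  colNE : ∀ i, 0 ≤ i → i ≤ x.1 → ∃ j, (i, j) ∈ I
  overlapV : ∀ j, 0 ≤ j → j < x.2 → ∃ i, (i, j) ∈ I ∧ (i, j + 1) ∈ I

variable {x : Pt} {I : Finset Pt} {S : Set LatticeEdge}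

lemma good_reach_row (hG : Good x I) (hC : Compat I S) {j a b : ℤ}
    (ha : (a, j) ∈ I) (hb : (b, j) ∈ I) :
    (graphOf S).Reachable (a, j) (b, j) := by
  have key : ∀ a b : ℤ, a ≤ b → (a, j) ∈ I → (b, j) ∈ I →
      (graphOf S).Reachable (a, j) (b, j) := by
    intro a b hab haI hbI
    have hk : b = a + ((b - a).toNat : ℤ) := by omega
    rw [hk]
    refine reach_row_in hC _ a fun t ht1 ht2 => ?_
    exact hG.rowConv j a b t haI hbI ht1 (by omega)
  rcases le_total a b with h | h
  · exact key a b h ha hb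
  · exact (key b a h hb ha).symm

lemma good_reach (hG : Good x I) (hC : Compat I S) {p q : Pt}
    (hp : p ∈ I) (hq : q ∈ I) : (graphOf S).Reachable p q := by
  have key : ∀ (k : ℕ) (p q : Pt), p ∈ I → q ∈ I → q.2 = p.2 + k →
      (graphOf S).Reachable p q := by
    intro k
    induction k with
    | zero =>
      intro p q hp hq hk
      have : q = (q.1, p.2) := by simp [Prod.ext_iff]; omega
      rw [this] at hq ⊢
      have : p = (p.1, p.2) := rfl
      rw [this] at hp ⊢
      exact good_reach_row hG hC hp hq
    | succ n ih =>
      intro p q hp hq hk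
      have hj0 : 0 ≤ p.2 := (hG.subset p hp).2.2.1
      have hjx : p.2 < x.2 := by
        have := (hG.subset q hq).2.2.2
        omega
      obtain ⟨i0, h1, h2⟩ := hG.overlapV p.2 hj0 hjx
      have r1 : (graphOf S).Reachable (p.1, p.2) (i0, p.2) :=
        good_reach_row hG hC (by simpa using hp) h1
      have r2 : (graphOf S).Adj (i0, p.2) (i0, p.2 + 1) :=
        adj_up hC (iff_of_true h1 h2)
      have r3 : (graphOf S).Reachable (i0, p.2 + 1) q :=
        ih (i0, p.2 + 1) q h2 hq (by simp; omega)
      exact ((Prod.mk.eta ▸ r1).trans r2.reachable).trans r3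
  rcases le_total p.2 q.2 with h | h
  · exact key (q.2 - p.2).toNat p q hp hq (by omega)
  · exact (key (p.2 - q.2).toNat q p hq hp (by omega)).symm

lemma closed_compl {γ : Finset LatticeEdge} {I : Finset Pt} (hI : γ = EB I) :
    ∀ u v, (complGraph γ).Adj u v → u ∈ I → v ∈ I := by
  intro u v hadj hu
  obtain ⟨hne, e, he, hev⟩ := hadj
  have heEB : e ∉ EB I := hI ▸ he
  rw [mem_EB] at heEB
  push_neg at heEB
  rcases ends_eq_iff.1 hev with ⟨h1, h2⟩ | ⟨h1, h2⟩
  · exact h2 ▸ (heEB.1 (h1.symm ▸ hu))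
  · exact h1 ▸ (heEB.2 (h2.symm ▸ hu))

lemma supp_eq_good (hG : Good x I) {p : Pt} (hp : p ∈ I) :
    ((complGraph (EB I)).connectedComponentMk p).supp = ↑I := by
  ext q
  rw [SimpleGraph.ConnectedComponent.mem_supp_iff, SimpleGraph.ConnectedComponent.eq]
  constructor
  · intro h
    exact reachable_closed (closed_compl rfl) h.symm hp
  · intro hq
    exact (good_reach hG (compat_compl I) hp hq).symm

lemma good_isContour (hG : Good x I) : IsContour (EB I) := by
  constructor
  · refine ⟨(complGraph (EB I)).connectedComponentMk ((0, 0) : Pt), ?_, ?_⟩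
    · show ((complGraph (EB I)).connectedComponentMk ((0, 0) : Pt)).supp.Finite
      rw [supp_eq_good hG hG.zero]
      exact I.finite_toSet
    · intro C hC
      obtain ⟨v, hv⟩ := Quot.exists_rep C
      have hvI : v ∈ I := by
        by_contra hvnot
        have hinf := outside_infinite (compat_compl I) hG.colConv hvnot
        rw [show (graphOf {e | e ∉ EB I}) = complGraph (EB I) from rfl] at hinf
        rw [← hv] at hC
        exact hinf hC
      have : v ∈ ((complGraph (EB I)).connectedComponentMk ((0,0) : Pt)).supp := by
        rw [supp_eq_good hG hG.zero]; exact_mod_cast hvI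
      rw [SimpleGraph.ConnectedComponent.mem_supp_iff] at this
      rw [← hv]
      exact this
  · intro e he C hfin
    obtain ⟨v, hv⟩ := Quot.exists_rep C
    have hC : Compat I {f | f ∉ EB I ∨ f = e} := compat_min I e
    -- endpoints of e
    rw [mem_EB] at he
    -- find a vertex outside I in the component of v
    have hout : ∃ w, w ∉ I ∧ (graphOf {f | f ∉ EB I ∨ f = e}).Reachable v w := by
      by_cases hvI : v ∈ I
      · rcases he with ⟨hu, hw⟩ | ⟨hu, hw⟩
        · refine ⟨e.snd, hw, ?_⟩
          exact (good_reach hG hC hvI hu).trans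
            (adj_of_edge (S := {f | f ∉ EB I ∨ f = e}) (Or.inr rfl)).reachable
        · refine ⟨e.fst, hw, ?_⟩
          exact (good_reach hG hC hvI hu).trans
            ((adj_of_edge (S := {f | f ∉ EB I ∨ f = e}) (Or.inr rfl)).reachable.symm)
      · exact ⟨v, hvI, SimpleGraph.Reachable.refl v⟩
    obtain ⟨w, hwI, hvw⟩ := hout
    have hinf := outside_infinite hC hG.colConv hwI
    have : ((graphOf {f | f ∉ EB I ∨ f = e}).connectedComponentMk w) = C := by
      rw [← hv]
      exact SimpleGraph.ConnectedComponent.sound hvw.symm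
    rw [this] at hinf
    exact hinf hfin

lemma good_surrounds (hG : Good x I) : Surrounds (EB I) {0, x} := by
  refine ⟨good_isContour hG, (complGraph (EB I)).connectedComponentMk ((0,0) : Pt), ?_, ?_⟩
  · rw [supp_eq_good hG hG.zero]; exact I.finite_toSet
  · rw [supp_eq_good hG hG.zero]
    intro p hp
    rcases hp with h | h
    · subst h; exact_mod_cast hG.zero
    · simp only [Set.mem_singleton_iff] at h; subst h; exact_mod_cast hG.xmem

lemma EB_inj {x x' : Pt} {I I' : Finset Pt} (hG : Good x I) (hG' : Good x' I')
    (h : EB I = EB I') : I = I' := by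
  have h1 : ((complGraph (EB I)).connectedComponentMk ((0,0) : Pt)).supp = ↑I :=
    supp_eq_good hG hG.zero
  have h2 : ((complGraph (EB I')).connectedComponentMk ((0,0) : Pt)).supp = ↑I' :=
    supp_eq_good hG' hG'.zero
  rw [← h] at h2
  exact Finset.coe_injective (h1 ▸ h2 ▸ rfl)


/-! ### Counting boundary edges -/

section ZLemmas

variable {S B : Finset ℤ}
  (hB : ∀ c, c ∈ B ↔ ((c ∈ S ∧ c + 1 ∉ S) ∨ (c + 1 ∈ S ∧ c ∉ S)))

/-- An interval-convexity predicate for finite sets of integers. -/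
def IntConv (S : Finset ℤ) : Prop := ∀ a b c : ℤ, a ∈ S → b ∈ S → a ≤ c → c ≤ b → c ∈ S

include hB

lemma two_le_cardB (hS : S.Nonempty) : 2 ≤ B.card := by
  have h1 : S.min' hS - 1 ∈ B := by
    rw [hB]
    right
    constructor
    · simpa using S.min'_mem hS
    · intro h; have := S.min'_le _ h; omega
  have h2 : S.max' hS ∈ B := by
    rw [hB]
    left
    refine ⟨S.max'_mem hS, fun h => ?_⟩
    have := S.le_max' _ h; omega
  have hne : S.min' hS - 1 ≠ S.max' hS := by
    have := S.min'_le _ (S.max'_mem hS); omega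
  calc 2 = ({S.min' hS - 1, S.max' hS} : Finset ℤ).card := (Finset.card_pair hne).symm
  _ ≤ B.card := Finset.card_le_card (by intro t ht; simp at ht; rcases ht with h | h <;> subst h <;> assumption)

lemma cardB_eq_two (hS : S.Nonempty) (hconv : IntConv S) : B.card = 2 := by
  have hBeq : B = {S.min' hS - 1, S.max' hS} := by
    ext c
    simp only [Finset.mem_insert, Finset.mem_singleton]
    rw [hB]
    constructor
    · rintro (⟨h1, h2⟩ | ⟨h1, h2⟩)
      · right
        by_contra hne
        have hcmax : c < S.max' hS := lt_of_le_of_ne (S.le_max' _ h1) hne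
        exact h2 (hconv (S.min' hS) (S.max' hS) (c+1) (S.min'_mem hS) (S.max'_mem hS)
          (by have := S.min'_le _ h1; omega) (by omega))
      · left
        by_contra hne
        have hcmin : S.min' hS < c + 1 := by
          have := S.min'_le _ h1
          omega
        exact h2 (hconv (S.min' hS) (S.max' hS) c (S.min'_mem hS) (S.max'_mem hS)
          (by omega) (by have := S.le_max' _ h1; omega))
    · rintro (h | h)
      · subst h
        right
        refine ⟨by simpa using S.min'_mem hS, fun hc => ?_⟩
        have := S.min'_le _ hc; omega
      · subst h
        left
        refine ⟨S.max'_mem hS, fun hc => ?_⟩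
        have := S.le_max' _ hc; omega
  rw [hBeq]
  exact Finset.card_pair (by have := S.min'_le _ (S.max'_mem hS); omega)

lemma conv_of_cardB_le (hS : S.Nonempty) (h2 : B.card ≤ 2) : IntConv S := by
  by_contra hnc
  unfold IntConv at hnc
  push_neg at hnc
  obtain ⟨a, b, g, haS, hbS, hag, hgb, hgS⟩ := hnc
  set T := S.filter (fun t => t < g) with hT
  have hTne : T.Nonempty := ⟨a, Finset.mem_filter.2 ⟨haS, lt_of_le_of_ne hag (fun h => hgS (h ▸ haS))⟩⟩
  set c0 := T.max' hTne with hc0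
  have hc0T : c0 ∈ T := T.max'_mem hTne
  have hc0S : c0 ∈ S := (Finset.mem_filter.1 hc0T).1
  have hc0g : c0 < g := (Finset.mem_filter.1 hc0T).2
  have hc1 : c0 + 1 ∉ S := by
    intro hmem
    rcases lt_trichotomy (c0 + 1) g with h | h | h
    · have : c0 + 1 ∈ T := Finset.mem_filter.2 ⟨hmem, h⟩
      have := T.le_max' _ this
      omega
    · exact hgS (h ▸ hmem)
    · omega
  have hc0B : c0 ∈ B := (hB c0).2 (Or.inl ⟨hc0S, hc1⟩)
  have h1 : S.min' hS - 1 ∈ B := by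
    rw [hB]; right
    refine ⟨by simpa using S.min'_mem hS, fun h => ?_⟩
    have := S.min'_le _ h; omega
  have h2' : S.max' hS ∈ B := by
    rw [hB]; left
    refine ⟨S.max'_mem hS, fun h => ?_⟩
    have := S.le_max' _ h; omega
  have hsub : ({S.min' hS - 1, c0, S.max' hS} : Finset ℤ) ⊆ B := by
    intro t ht; simp at ht; rcases ht with h | h | h <;> subst h <;> assumption
  have hd1 : S.min' hS - 1 ≠ c0 := by have := S.min'_le _ hc0S; omega
  have hd2 : c0 ≠ S.max' hS := by have := S.le_max' _ hbS; omega
  have hd3 : S.min' hS - 1 ≠ S.max' hS := by have := S.min'_le _ (S.max'_mem hS); omega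
  have : ({S.min' hS - 1, c0, S.max' hS} : Finset ℤ).card = 3 := by
    rw [Finset.card_insert_of_notMem (by simp [hd1, hd3]),
      Finset.card_insert_of_notMem (by simp [hd2])]
    rfl
  have := Finset.card_le_card hsub
  omega

end ZLemmas

/-! ### Fibers of the edge boundary -/

def colS (I : Finset Pt) (i : ℤ) : Finset ℤ := (I.filter fun p => p.1 = i).image Prod.snd
def rowS (I : Finset Pt) (j : ℤ) : Finset ℤ := (I.filter fun p => p.2 = j).image Prod.fst

lemma mem_colS {I : Finset Pt} {i c : ℤ} : c ∈ colS I i ↔ (i, c) ∈ I := by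
  simp only [colS, Finset.mem_image, Finset.mem_filter]
  constructor
  · rintro ⟨p, ⟨hp, h1⟩, h2⟩
    have : p = (i, c) := by rw [Prod.ext_iff]; exact ⟨h1, h2⟩
    exact this ▸ hp
  · intro h; exact ⟨(i, c), ⟨h, rfl⟩, rfl⟩

lemma mem_rowS {I : Finset Pt} {j c : ℤ} : c ∈ rowS I j ↔ (c, j) ∈ I := by
  simp only [rowS, Finset.mem_image, Finset.mem_filter]
  constructor
  · rintro ⟨p, ⟨hp, h1⟩, h2⟩
    have : p = (c, j) := by rw [Prod.ext_iff]; exact ⟨h2, h1⟩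
    exact this ▸ hp
  · intro h; exact ⟨(c, j), ⟨h, rfl⟩, rfl⟩

def Vfib (I : Finset Pt) (i : ℤ) : Finset LatticeEdge :=
  (EB I).filter fun e => e.horiz = false ∧ e.base.1 = i

def Hfib (I : Finset Pt) (j : ℤ) : Finset LatticeEdge :=
  (EB I).filter fun e => e.horiz = true ∧ e.base.2 = j

lemma mem_Vfib {I : Finset Pt} {i : ℤ} {e : LatticeEdge} :
    e ∈ Vfib I i ↔ ∃ c : ℤ, e = vE (i, c) ∧
      (((i, c) ∈ I ∧ (i, c + 1) ∉ I) ∨ ((i, c + 1) ∈ I ∧ (i, c) ∉ I)) := by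
  constructor
  · intro h
    obtain ⟨hEB, hhor, hbase⟩ := Finset.mem_filter.1 h
    refine ⟨e.base.2, ?_, ?_⟩
    · cases e with
      | mk b hh => simp only at hhor hbase; subst hhor
                   simp [vE, ← hbase]
    · have := mem_EB.1 hEB
      rcases edge_cases e with hc | hc
      · rw [hc] at hhor; simp [hE] at hhor
      · rw [hc] at this
        simp only [vE_fst, vE_snd] at this
        rw [show e.base = (i, e.base.2) from by rw [Prod.ext_iff]; exact ⟨hbase, rfl⟩] at this
        exact this
  · rintro ⟨c, he, hcond⟩
    subst he
    refine Finset.mem_filter.2 ⟨mem_EB.2 ?_, rfl, rfl⟩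
    simpa using hcond

lemma mem_Hfib {I : Finset Pt} {j : ℤ} {e : LatticeEdge} :
    e ∈ Hfib I j ↔ ∃ c : ℤ, e = hE (c, j) ∧
      (((c, j) ∈ I ∧ (c + 1, j) ∉ I) ∨ ((c + 1, j) ∈ I ∧ (c, j) ∉ I)) := by
  constructor
  · intro h
    obtain ⟨hEB, hhor, hbase⟩ := Finset.mem_filter.1 h
    refine ⟨e.base.1, ?_, ?_⟩
    · cases e with
      | mk b hh => simp only at hhor hbase; subst hhor
                   simp [hE, ← hbase]
    · have := mem_EB.1 hEB
      rcases edge_cases e with hc | hc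
      · rw [hc] at this
        simp only [hE_fst, hE_snd] at this
        rw [show e.base = (e.base.1, j) from by rw [Prod.ext_iff]; exact ⟨rfl, hbase⟩] at this
        exact this
      · rw [hc] at hhor; simp [vE] at hhor
  · rintro ⟨c, he, hcond⟩
    subst he
    refine Finset.mem_filter.2 ⟨mem_EB.2 ?_, rfl, rfl⟩
    simpa using hcond

lemma Vfib_card (I : Finset Pt) (i : ℤ) :
    (Vfib I i).card = ((Vfib I i).image fun e => e.base.2).card := by
  rw [Finset.card_image_of_injOn]
  intro e he f hf hef
  obtain ⟨c, hc, -⟩ := mem_Vfib.1 he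
  obtain ⟨d, hd, -⟩ := mem_Vfib.1 hf
  subst hc; subst hd
  simp [vE] at hef ⊢
  exact hef

lemma Hfib_card (I : Finset Pt) (j : ℤ) :
    (Hfib I j).card = ((Hfib I j).image fun e => e.base.1).card := by
  rw [Finset.card_image_of_injOn]
  intro e he f hf hef
  obtain ⟨c, hc, -⟩ := mem_Hfib.1 he
  obtain ⟨d, hd, -⟩ := mem_Hfib.1 hf
  subst hc; subst hd
  simp [hE] at hef ⊢
  exact hef

lemma mem_Vfib_image {I : Finset Pt} {i c : ℤ} :
    c ∈ ((Vfib I i).image fun e => e.base.2) ↔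
      ((c ∈ colS I i ∧ c + 1 ∉ colS I i) ∨ (c + 1 ∈ colS I i ∧ c ∉ colS I i)) := by
  simp only [Finset.mem_image, mem_colS]
  constructor
  · rintro ⟨e, he, hc⟩
    obtain ⟨d, hd, hcond⟩ := mem_Vfib.1 he
    subst hd
    simp [vE] at hc
    subst hc
    exact hcond
  · intro h
    exact ⟨vE (i, c), mem_Vfib.2 ⟨c, rfl, h⟩, rfl⟩

lemma mem_Hfib_image {I : Finset Pt} {j c : ℤ} :
    c ∈ ((Hfib I j).image fun e => e.base.1) ↔
      ((c ∈ rowS I j ∧ c + 1 ∉ rowS I j) ∨ (c + 1 ∈ rowS I j ∧ c ∉ rowS I j)) := by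
  simp only [Finset.mem_image, mem_rowS]
  constructor
  · rintro ⟨e, he, hc⟩
    obtain ⟨d, hd, hcond⟩ := mem_Hfib.1 he
    subst hd
    simp [hE] at hc
    subst hc
    exact hcond
  · intro h
    exact ⟨hE (c, j), mem_Hfib.2 ⟨c, rfl, h⟩, rfl⟩

lemma two_le_Vfib_card {I : Finset Pt} {i : ℤ} (h : (colS I i).Nonempty) :
    2 ≤ (Vfib I i).card := by
  rw [Vfib_card]
  exact two_le_cardB (fun c => mem_Vfib_image) h

lemma Vfib_card_eq_two {I : Finset Pt} {i : ℤ} (h : (colS I i).Nonempty)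
    (hconv : IntConv (colS I i)) : (Vfib I i).card = 2 := by
  rw [Vfib_card]
  exact cardB_eq_two (fun c => mem_Vfib_image) h hconv

lemma conv_of_Vfib_le {I : Finset Pt} {i : ℤ} (h : (colS I i).Nonempty)
    (h2 : (Vfib I i).card ≤ 2) : IntConv (colS I i) := by
  rw [Vfib_card] at h2
  exact conv_of_cardB_le (fun c => mem_Vfib_image) h h2

lemma two_le_Hfib_card {I : Finset Pt} {j : ℤ} (h : (rowS I j).Nonempty) :
    2 ≤ (Hfib I j).card := by
  rw [Hfib_card]
  exact two_le_cardB (fun c => mem_Hfib_image) h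

lemma Hfib_card_eq_two {I : Finset Pt} {j : ℤ} (h : (rowS I j).Nonempty)
    (hconv : IntConv (rowS I j)) : (Hfib I j).card = 2 := by
  rw [Hfib_card]
  exact cardB_eq_two (fun c => mem_Hfib_image) h hconv

lemma conv_of_Hfib_le {I : Finset Pt} {j : ℤ} (h : (rowS I j).Nonempty)
    (h2 : (Hfib I j).card ≤ 2) : IntConv (rowS I j) := by
  rw [Hfib_card] at h2
  exact conv_of_cardB_le (fun c => mem_Hfib_image) h h2

/-! ### Decomposition of the boundary into fibers -/

def colsI (I : Finset Pt) : Finset ℤ := I.image Prod.fst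
def rowsI (I : Finset Pt) : Finset ℤ := I.image Prod.snd

lemma mem_colsI {I : Finset Pt} {i : ℤ} : i ∈ colsI I ↔ (colS I i).Nonempty := by
  simp only [colsI, Finset.mem_image]
  constructor
  · rintro ⟨p, hp, hi⟩
    exact ⟨p.2, mem_colS.2 (by rw [show ((i : ℤ), p.2) = p from by rw [Prod.ext_iff]; exact ⟨hi.symm, rfl⟩]; exact hp)⟩
  · rintro ⟨c, hc⟩
    exact ⟨(i, c), mem_colS.1 hc, rfl⟩

lemma mem_rowsI {I : Finset Pt} {j : ℤ} : j ∈ rowsI I ↔ (rowS I j).Nonempty := by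
  simp only [rowsI, Finset.mem_image]
  constructor
  · rintro ⟨p, hp, hj⟩
    exact ⟨p.1, mem_rowS.2 (by rw [show ((p.1 : ℤ), j) = p from by rw [Prod.ext_iff]; exact ⟨rfl, hj.symm⟩]; exact hp)⟩
  · rintro ⟨c, hc⟩
    exact ⟨(c, j), mem_rowS.1 hc, rfl⟩

lemma EB_card_decomp (I : Finset Pt) :
    (EB I).card = (∑ j ∈ rowsI I, (Hfib I j).card) + (∑ i ∈ colsI I, (Vfib I i).card) := by
  have hsplit := Finset.card_filter_add_card_filter_not
    (s := EB I) (p := fun e => e.horiz = true)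
  have hH : ((EB I).filter fun e => e.horiz = true).card = ∑ j ∈ rowsI I, (Hfib I j).card := by
    rw [Finset.card_eq_sum_card_fiberwise (f := fun e => e.base.2) (t := rowsI I)]
    · refine Finset.sum_congr rfl fun j _ => ?_
      congr 1
      rw [Finset.filter_filter]
      unfold Hfib
      congr 1
    · intro e he
      obtain ⟨heEB, hhor⟩ := Finset.mem_filter.1 he
      rcases edge_cases e with hc | hc
      · have := mem_EB.1 heEB
        rw [hc] at this
        simp only [hE_fst, hE_snd] at this
        rw [Finset.mem_coe, mem_rowsI]
        rcases this with ⟨h1, -⟩ | ⟨h1, -⟩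
        · exact ⟨e.base.1, mem_rowS.2 (by simpa using h1)⟩
        · exact ⟨e.base.1 + 1, mem_rowS.2 (by simpa using h1)⟩
      · rw [hc] at hhor; simp [vE] at hhor
  have hV : ((EB I).filter fun e => ¬ (e.horiz = true)).card
      = ∑ i ∈ colsI I, (Vfib I i).card := by
    rw [Finset.card_eq_sum_card_fiberwise (f := fun e => e.base.1) (t := colsI I)]
    · refine Finset.sum_congr rfl fun i _ => ?_
      congr 1
      rw [Finset.filter_filter]
      unfold Vfib
      refine Finset.filter_congr fun e _ => ?_
      constructor
      · rintro ⟨h1, h2⟩; exact ⟨by simpa using h1, h2⟩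
      · rintro ⟨h1, h2⟩; exact ⟨by simp [h1], h2⟩
    · intro e he
      obtain ⟨heEB, hhor⟩ := Finset.mem_filter.1 he
      rcases edge_cases e with hc | hc
      · rw [hc] at hhor; simp [hE] at hhor
      · have := mem_EB.1 heEB
        rw [hc] at this
        simp only [vE_fst, vE_snd] at this
        rw [Finset.mem_coe, mem_colsI]
        rcases this with ⟨h1, -⟩ | ⟨h1, -⟩
        · exact ⟨e.base.2, mem_colS.2 (by simpa using h1)⟩
        · exact ⟨e.base.2 + 1, mem_colS.2 (by simpa using h1)⟩
  omega


variable {x : Pt} {I : Finset Pt}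

lemma colsI_eq_of_good (hG : Good x I) : colsI I = Finset.Icc 0 x.1 := by
  ext i
  rw [mem_colsI, Finset.mem_Icc]
  constructor
  · rintro ⟨c, hc⟩
    have := hG.subset _ (mem_colS.1 hc)
    exact ⟨this.1, this.2.1⟩
  · rintro ⟨h1, h2⟩
    obtain ⟨j, hj⟩ := hG.colNE i h1 h2
    exact ⟨j, mem_colS.2 hj⟩

lemma rowsI_eq_of_good (hG : Good x I) : rowsI I = Finset.Icc 0 x.2 := by
  ext j
  rw [mem_rowsI, Finset.mem_Icc]
  constructor
  · rintro ⟨c, hc⟩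
    have := hG.subset _ (mem_rowS.1 hc)
    exact ⟨this.2.2.1, this.2.2.2⟩
  · rintro ⟨h1, h2⟩
    obtain ⟨i, hi⟩ := hG.rowNE j h1 h2
    exact ⟨i, mem_rowS.2 hi⟩

lemma card_EB_of_good (hG : Good x I) : (EB I).card = normC x := by
  have h0x1 : 0 ≤ x.1 := (hG.subset x hG.xmem).1
  have h0x2 : 0 ≤ x.2 := (hG.subset x hG.xmem).2.2.1
  rw [EB_card_decomp]
  have hH : ∀ j ∈ rowsI I, (Hfib I j).card = 2 := by
    intro j hj
    refine Hfib_card_eq_two (mem_rowsI.1 hj) ?_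
    intro a b c ha hb hac hcb
    exact mem_rowS.2 (hG.rowConv j a b c (mem_rowS.1 ha) (mem_rowS.1 hb) hac hcb)
  have hV : ∀ i ∈ colsI I, (Vfib I i).card = 2 := by
    intro i hi
    refine Vfib_card_eq_two (mem_colsI.1 hi) ?_
    intro a b c ha hb hac hcb
    exact mem_colS.2 (hG.colConv i a b c (mem_colS.1 ha) (mem_colS.1 hb) hac hcb)
  rw [Finset.sum_congr rfl hH, Finset.sum_congr rfl hV, Finset.sum_const, Finset.sum_const,
    rowsI_eq_of_good hG, colsI_eq_of_good hG, Int.card_Icc, Int.card_Icc]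
  unfold normC
  simp only [smul_eq_mul]
  omega

lemma good_mem_gamma (hG : Good x I) : EB I ∈ GammaN {0, x} (normC x) :=
  ⟨good_surrounds hG, card_EB_of_good hG⟩

/-! ### Walk lemmas -/

lemma walk_fst_interval {S : Set LatticeEdge} {P : Pt → Prop}
    (hcl : ∀ u v, (graphOf S).Adj u v → P u → P v) :
    ∀ {u v : Pt} (_ : (graphOf S).Walk u v), P u →
      ∀ k, u.1 ≤ k → k ≤ v.1 → ∃ r, P r ∧ r.1 = k := by
  intro u v w
  induction w with
  | nil => exact fun hu k h1 h2 => ⟨_, hu, by omega⟩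
  | @cons u' v' w' h q ih =>
    intro hu k h1 h2
    have hv : P v' := hcl _ _ h hu
    by_cases hk : v'.1 ≤ k
    · exact ih hv k hk h2
    · refine ⟨u', hu, ?_⟩
      rcases step_of_adj h with ⟨ha, hb⟩ | ⟨ha, hb⟩ | ⟨ha, hb⟩ | ⟨ha, hb⟩ <;> omega

lemma walk_snd_interval {S : Set LatticeEdge} {P : Pt → Prop}
    (hcl : ∀ u v, (graphOf S).Adj u v → P u → P v) :
    ∀ {u v : Pt} (_ : (graphOf S).Walk u v), P u →
      ∀ k, u.2 ≤ k → k ≤ v.2 → ∃ r, P r ∧ r.2 = k := by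
  intro u v w
  induction w with
  | nil => exact fun hu k h1 h2 => ⟨_, hu, by omega⟩
  | @cons u' v' w' h q ih =>
    intro hu k h1 h2
    have hv : P v' := hcl _ _ h hu
    by_cases hk : v'.2 ≤ k
    · exact ih hv k hk h2
    · refine ⟨u', hu, ?_⟩
      rcases step_of_adj h with ⟨ha, hb⟩ | ⟨ha, hb⟩ | ⟨ha, hb⟩ | ⟨ha, hb⟩ <;> omega

lemma walk_cross {S : Set LatticeEdge} {P : Pt → Prop}
    (hcl : ∀ u v, (graphOf S).Adj u v → P u → P v) :
    ∀ {u v : Pt} (_ : (graphOf S).Walk u v), P u →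
      ∀ j, u.2 ≤ j → j < v.2 → ∃ i, P (i, j) ∧ P (i, j + 1) := by
  intro u v w
  induction w with
  | nil => intro _ j h1 h2; omega
  | @cons u' v' w' h q ih =>
    intro hu j h1 h2
    have hv : P v' := hcl _ _ h hu
    by_cases hk : v'.2 ≤ j
    · exact ih hv j hk h2
    · push_neg at hk
      rcases step_of_adj h with ⟨ha, hb⟩ | ⟨ha, hb⟩ | ⟨ha, hb⟩ | ⟨ha, hb⟩
      · omega
      · refine ⟨u'.1, ?_, ?_⟩
        · have he : (u'.1, j) = u' := by rw [Prod.ext_iff]; exact ⟨rfl, by omega⟩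
          exact he.symm ▸ hu
        · have he : (u'.1, j + 1) = v' := by rw [Prod.ext_iff]; constructor <;> omega
          exact he.symm ▸ hv
      · omega
      · omega

lemma sum_forcing {s : Finset ℤ} {f : ℤ → ℕ} (h2 : ∀ i ∈ s, 2 ≤ f i)
    (hsum : ∑ i ∈ s, f i = 2 * s.card) : ∀ i ∈ s, f i = 2 := by
  by_contra hc
  push_neg at hc
  obtain ⟨i0, hi0, hne⟩ := hc
  have hlt : ∑ i ∈ s, (fun _ => 2) i < ∑ i ∈ s, f i :=
    Finset.sum_lt_sum h2 ⟨i0, hi0, lt_of_le_of_ne (h2 i0 hi0) (Ne.symm hne)⟩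
  rw [Finset.sum_const, smul_eq_mul] at hlt
  omega

/-! ### The structure theorem: minimal contours are `EB I` for a `Good I` -/

lemma gamma_structure (hx1 : 1 ≤ x.1) (hx2 : 1 ≤ x.2)
    {γ : Finset LatticeEdge} (hγ : γ ∈ GammaN {0, x} (normC x)) :
    ∃ I : Finset Pt, Good x I ∧ γ = EB I := by
  obtain ⟨⟨⟨huniq, hmin⟩, C, hCfin, hCsub⟩, hcard⟩ := hγ
  set I : Finset Pt := hCfin.toFinset with hIdef
  have hmemI : ∀ p : Pt, p ∈ I ↔ p ∈ C.supp := fun p => Set.Finite.mem_toFinset _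
  have h0supp : ((0, 0) : Pt) ∈ C.supp := hCsub (Set.mem_insert _ _)
  have hxsupp : x ∈ C.supp := hCsub (by simp)
  have h0 : ((0, 0) : Pt) ∈ I := (hmemI _).2 h0supp
  have hx : x ∈ I := (hmemI _).2 hxsupp
  have hclosedC : ∀ u v, (complGraph γ).Adj u v → u ∈ C.supp → v ∈ C.supp := by
    intro u v hadj hu
    rw [SimpleGraph.ConnectedComponent.mem_supp_iff] at hu ⊢
    rw [← hu]
    exact SimpleGraph.ConnectedComponent.sound hadj.symm.reachable
  have hreachC : ∀ p q : Pt, p ∈ C.supp → q ∈ C.supp → (complGraph γ).Reachable p q := by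
    intro p q hp hq
    rw [SimpleGraph.ConnectedComponent.mem_supp_iff] at hp hq
    exact SimpleGraph.ConnectedComponent.eq.1 (hp.trans hq.symm)
  have hEB : γ = EB I := by
    apply Finset.Subset.antisymm
    · intro e he
      by_contra heEB
      have hboth : (e.fst ∈ C.supp ↔ e.snd ∈ C.supp) := by
        rw [mem_EB] at heEB
        push_neg at heEB
        exact ⟨fun h => (hmemI _).1 (heEB.1 ((hmemI _).2 h)),
          fun h => (hmemI _).1 (heEB.2 ((hmemI _).2 h))⟩
      have hcl' : ∀ u v, (graphOf {f | f ∉ γ ∨ f = e}).Adj u v →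
          u ∈ C.supp → v ∈ C.supp := by
        intro u v hadj hu
        obtain ⟨hne, f, hf, hev⟩ := hadj
        rcases hf with hf | hf
        · exact hclosedC u v ⟨hne, f, hf, hev⟩ hu
        · subst hf
          rcases ends_eq_iff.1 hev with ⟨h1, h2⟩ | ⟨h1, h2⟩
          · exact h2 ▸ (hboth.1 (h1.symm ▸ hu))
          · exact h1 ▸ (hboth.2 (h2.symm ▸ hu))
      have hsupp : ((graphOf {f | f ∉ γ ∨ f = e}).connectedComponentMk
          ((0, 0) : Pt)).supp = C.supp := by
        ext q
        rw [SimpleGraph.ConnectedComponent.mem_supp_iff, SimpleGraph.ConnectedComponent.eq]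
        constructor
        · intro h
          exact reachable_closed hcl' h.symm h0supp
        · intro hq
          exact ((hreachC q (0, 0) hq h0supp).mono
            (graphOf_mono fun f hf => Or.inl hf))
      exact hmin e he _ (hsupp ▸ hCfin)
    · intro e heEB
      by_contra heγ
      rw [mem_EB] at heEB
      have hiff : e.fst ∈ C.supp ↔ e.snd ∈ C.supp := by
        constructor
        · exact fun h => hclosedC _ _ ⟨fst_ne_snd e, e, heγ, rfl⟩ h
        · exact fun h => hclosedC _ _ (SimpleGraph.Adj.symm ⟨fst_ne_snd e, e, heγ, rfl⟩) h
      rcases heEB with ⟨h1, h2⟩ | ⟨h1, h2⟩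
      · exact h2 ((hmemI _).2 (hiff.1 ((hmemI _).1 h1)))
      · exact h2 ((hmemI _).2 (hiff.2 ((hmemI _).1 h1)))
  obtain ⟨w⟩ : (complGraph γ).Reachable ((0, 0) : Pt) x := hreachC _ _ h0supp hxsupp
  have hIcc1 : Finset.Icc (0 : ℤ) x.1 ⊆ colsI I := by
    intro k hk
    rw [Finset.mem_Icc] at hk
    obtain ⟨r, hrP, hr1⟩ := walk_fst_interval hclosedC w h0supp k hk.1 hk.2
    rw [mem_colsI]
    refine ⟨r.2, mem_colS.2 ?_⟩
    have : ((k, r.2) : Pt) = r := by rw [Prod.ext_iff]; exact ⟨hr1.symm, rfl⟩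
    rw [this]
    exact (hmemI r).2 hrP
  have hIcc2 : Finset.Icc (0 : ℤ) x.2 ⊆ rowsI I := by
    intro k hk
    rw [Finset.mem_Icc] at hk
    obtain ⟨r, hrP, hr2⟩ := walk_snd_interval hclosedC w h0supp k hk.1 hk.2
    rw [mem_rowsI]
    refine ⟨r.1, mem_rowS.2 ?_⟩
    have : ((r.1, k) : Pt) = r := by rw [Prod.ext_iff]; exact ⟨rfl, hr2.symm⟩
    rw [this]
    exact (hmemI r).2 hrP
  have hover : ∀ j, 0 ≤ j → j < x.2 → ∃ i, (i, j) ∈ I ∧ (i, j + 1) ∈ I := by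
    intro j hj1 hj2
    obtain ⟨i, hi1, hi2⟩ := walk_cross hclosedC w h0supp j hj1 hj2
    exact ⟨i, (hmemI _).2 hi1, (hmemI _).2 hi2⟩
  -- counting
  have hcard' : (∑ j ∈ rowsI I, (Hfib I j).card) + (∑ i ∈ colsI I, (Vfib I i).card)
      = normC x := by
    rw [← EB_card_decomp, ← hEB]
    exact hcard
  have hge2V : ∀ i ∈ colsI I, 2 ≤ (Vfib I i).card :=
    fun i hi => two_le_Vfib_card (mem_colsI.1 hi)
  have hge2H : ∀ j ∈ rowsI I, 2 ≤ (Hfib I j).card :=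
    fun j hj => two_le_Hfib_card (mem_rowsI.1 hj)
  have hVlb : 2 * (colsI I).card ≤ ∑ i ∈ colsI I, (Vfib I i).card := by
    calc 2 * (colsI I).card = ∑ _i ∈ colsI I, 2 := by rw [Finset.sum_const, smul_eq_mul]; ring
    _ ≤ _ := Finset.sum_le_sum hge2V
  have hHlb : 2 * (rowsI I).card ≤ ∑ j ∈ rowsI I, (Hfib I j).card := by
    calc 2 * (rowsI I).card = ∑ _j ∈ rowsI I, 2 := by rw [Finset.sum_const, smul_eq_mul]; ring
    _ ≤ _ := Finset.sum_le_sum hge2H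
  have hclb : (Finset.Icc (0 : ℤ) x.1).card ≤ (colsI I).card := Finset.card_le_card hIcc1
  have hrlb : (Finset.Icc (0 : ℤ) x.2).card ≤ (rowsI I).card := Finset.card_le_card hIcc2
  rw [Int.card_Icc] at hclb
  rw [Int.card_Icc] at hrlb
  have hnormval : normC x = 2 * (x.1 + 1 - 0).toNat + 2 * (x.2 + 1 - 0).toNat := by
    unfold normC; omega
  have hVeq : ∑ i ∈ colsI I, (Vfib I i).card = 2 * (colsI I).card := by omega
  have hHeq : ∑ j ∈ rowsI I, (Hfib I j).card = 2 * (rowsI I).card := by omega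
  have hceq : (colsI I).card = (x.1 + 1 - 0).toNat := by omega
  have hreq : (rowsI I).card = (x.2 + 1 - 0).toNat := by omega
  have hcols : colsI I = Finset.Icc 0 x.1 :=
    (Finset.eq_of_subset_of_card_le hIcc1 (by rw [Int.card_Icc]; omega)).symm
  have hrows : rowsI I = Finset.Icc 0 x.2 :=
    (Finset.eq_of_subset_of_card_le hIcc2 (by rw [Int.card_Icc]; omega)).symm
  have hVfib2 : ∀ i ∈ colsI I, (Vfib I i).card = 2 := sum_forcing hge2V hVeq
  have hHfib2 : ∀ j ∈ rowsI I, (Hfib I j).card = 2 := sum_forcing hge2H hHeq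
  refine ⟨I, ?_, hEB⟩
  have hsubset : ∀ p ∈ I, 0 ≤ p.1 ∧ p.1 ≤ x.1 ∧ 0 ≤ p.2 ∧ p.2 ≤ x.2 := by
    intro p hp
    have h1 : p.1 ∈ colsI I := by
      rw [mem_colsI]
      exact ⟨p.2, mem_colS.2 (by rw [Prod.mk.eta]; exact hp)⟩
    have h2 : p.2 ∈ rowsI I := by
      rw [mem_rowsI]
      exact ⟨p.1, mem_rowS.2 (by rw [Prod.mk.eta]; exact hp)⟩
    rw [hcols, Finset.mem_Icc] at h1
    rw [hrows, Finset.mem_Icc] at h2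
    exact ⟨h1.1, h1.2, h2.1, h2.2⟩
  refine ⟨hsubset, h0, hx, ?_, ?_, ?_, ?_, hover⟩
  · -- rowConv
    intro j a b c ha hb hac hcb
    have hjmem : j ∈ rowsI I := mem_rowsI.2 ⟨a, mem_rowS.2 ha⟩
    have := conv_of_Hfib_le (mem_rowsI.1 hjmem) (le_of_eq (hHfib2 j hjmem))
    exact mem_rowS.1 (this a b c (mem_rowS.2 ha) (mem_rowS.2 hb) hac hcb)
  · -- colConv
    intro i a b c ha hb hac hcb
    have himem : i ∈ colsI I := mem_colsI.2 ⟨a, mem_colS.2 ha⟩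
    have := conv_of_Vfib_le (mem_colsI.1 himem) (le_of_eq (hVfib2 i himem))
    exact mem_colS.1 (this a b c (mem_colS.2 ha) (mem_colS.2 hb) hac hcb)
  · -- rowNE
    intro j hj1 hj2
    have : j ∈ rowsI I := by rw [hrows, Finset.mem_Icc]; exact ⟨hj1, hj2⟩
    obtain ⟨i, hi⟩ := mem_rowsI.1 this
    exact ⟨i, mem_rowS.1 hi⟩
  · -- colNE
    intro i hi1 hi2
    have : i ∈ colsI I := by rw [hcols, Finset.mem_Icc]; exact ⟨hi1, hi2⟩
    obtain ⟨j, hj⟩ := mem_colsI.1 this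
    exact ⟨j, mem_colS.1 hj⟩


/-! ### Gluing two good sets at a corner -/

def shiftI (v : Pt) (I : Finset Pt) : Finset Pt := I.image fun q => (q.1 + v.1, q.2 + v.2)

lemma mem_shift_iff {v : Pt} {I : Finset Pt} {a b : ℤ} :
    ((a, b) : Pt) ∈ shiftI v I ↔ ((a - v.1, b - v.2) : Pt) ∈ I := by
  simp only [shiftI, Finset.mem_image]
  constructor
  · rintro ⟨q, hq, heq⟩
    rw [Prod.ext_iff] at heq
    simp only at heq
    have : ((a - v.1, b - v.2) : Pt) = q := by
      rw [Prod.ext_iff]; constructor <;> simp <;> omega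
    rw [this]; exact hq
  · intro h
    refine ⟨_, h, ?_⟩
    rw [Prod.ext_iff]; constructor <;> simp

lemma shift_mem' {v : Pt} {I : Finset Pt} {a b : ℤ} (h : ((a, b) : Pt) ∈ I) :
    ((a + v.1, b + v.2) : Pt) ∈ shiftI v I := by
  rw [mem_shift_iff]
  simpa using h

lemma good_bounds {x : Pt} {I : Finset Pt} (hG : Good x I) {a b : ℤ}
    (h : ((a, b) : Pt) ∈ I) : 0 ≤ a ∧ a ≤ x.1 ∧ 0 ≤ b ∧ b ≤ x.2 :=
  hG.subset (a, b) h

lemma shift_bounds {x y : Pt} {I2 : Finset Pt} (h2 : Good y I2) {a b : ℤ}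
    (h : ((a, b) : Pt) ∈ shiftI x I2) :
    x.1 ≤ a ∧ a ≤ x.1 + y.1 ∧ x.2 ≤ b ∧ b ≤ x.2 + y.2 := by
  have := good_bounds h2 (mem_shift_iff.1 h)
  exact ⟨by omega, by omega, by omega, by omega⟩

lemma good_glue {x y : Pt} {I1 I2 : Finset Pt} (h1 : Good x I1) (h2 : Good y I2) :
    Good (x.1 + y.1, x.2 + y.2) (I1 ∪ shiftI x I2) := by
  have hx1 : 0 ≤ x.1 := (h1.subset x h1.xmem).1
  have hx2 : 0 ≤ x.2 := (h1.subset x h1.xmem).2.2.1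
  have hy1 : 0 ≤ y.1 := (h2.subset y h2.xmem).1
  have hy2 : 0 ≤ y.2 := (h2.subset y h2.xmem).2.2.1
  have hxI1 : ((x.1, x.2) : Pt) ∈ I1 := by rw [Prod.mk.eta]; exact h1.xmem
  have hyI2 : ((y.1, y.2) : Pt) ∈ I2 := by rw [Prod.mk.eta]; exact h2.xmem
  constructor
  case subset =>
    intro p hp
    rcases Finset.mem_union.1 hp with h | h
    · have := h1.subset p h
      constructor
      · omega
      constructor
      · simp only; omega
      constructor
      · omega
      · simp only; omega
    · rw [show p = ((p.1, p.2) : Pt) from (Prod.mk.eta).symm] at h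
      have := shift_bounds h2 h
      exact ⟨by omega, by simp only; omega, by omega, by simp only; omega⟩
  case zero => exact Finset.mem_union.2 (Or.inl h1.zero)
  case xmem =>
    refine Finset.mem_union.2 (Or.inr ?_)
    show ((x.1 + y.1, x.2 + y.2) : Pt) ∈ shiftI x I2
    have := shift_mem' (v := x) hyI2
    have he : ((y.1 + x.1, y.2 + x.2) : Pt) = ((x.1 + y.1, x.2 + y.2) : Pt) := by
      rw [Prod.ext_iff]; constructor <;> simp <;> ring
    rwa [he] at this
  case rowConv =>
    intro j a b c ha hb hac hcb
    rcases Finset.mem_union.1 ha with haL | haR <;> rcases Finset.mem_union.1 hb with hbL | hbR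
    · exact Finset.mem_union.2 (Or.inl (h1.rowConv j a b c haL hbL hac hcb))
    · -- a in I1, b in shift: j = x.2
      have hja := good_bounds h1 haL
      have hjb := shift_bounds h2 hbR
      have hj : j = x.2 := by omega
      by_cases hc : c ≤ x.1
      · refine Finset.mem_union.2 (Or.inl ?_)
        subst hj
        exact h1.rowConv x.2 a x.1 c haL hxI1 hac hc
      · refine Finset.mem_union.2 (Or.inr ?_)
        rw [mem_shift_iff]
        have hb2 : ((b - x.1, j - x.2) : Pt) ∈ I2 := mem_shift_iff.1 hbR
        have h02 : ((0 : ℤ), (0 : ℤ)) ∈ I2 := h2.zero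
        have : ((c - x.1, j - x.2) : Pt) ∈ I2 := by
          rw [show j - x.2 = 0 by omega] at hb2 ⊢
          exact h2.rowConv 0 0 (b - x.1) (c - x.1) h02 hb2 (by omega) (by omega)
        exact this
    · -- a in shift, b in I1 : forces c = x.1, j = x.2
      have hja := shift_bounds h2 haR
      have hjb := good_bounds h1 hbL
      have hc : c = x.1 := by omega
      have hj : j = x.2 := by omega
      refine Finset.mem_union.2 (Or.inl ?_)
      rw [hc, hj]
      exact hxI1
    · -- both in shift
      refine Finset.mem_union.2 (Or.inr ?_)
      rw [mem_shift_iff]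
      exact h2.rowConv (j - x.2) (a - x.1) (b - x.1) (c - x.1)
        (mem_shift_iff.1 haR) (mem_shift_iff.1 hbR) (by omega) (by omega)
  case colConv =>
    intro i a b c ha hb hac hcb
    rcases Finset.mem_union.1 ha with haL | haR <;> rcases Finset.mem_union.1 hb with hbL | hbR
    · exact Finset.mem_union.2 (Or.inl (h1.colConv i a b c haL hbL hac hcb))
    · have hja := good_bounds h1 haL
      have hjb := shift_bounds h2 hbR
      have hi : i = x.1 := by omega
      by_cases hc : c ≤ x.2
      · refine Finset.mem_union.2 (Or.inl ?_)
        subst hi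
        exact h1.colConv x.1 a x.2 c haL hxI1 hac hc
      · refine Finset.mem_union.2 (Or.inr ?_)
        rw [mem_shift_iff]
        have hb2 : ((i - x.1, b - x.2) : Pt) ∈ I2 := mem_shift_iff.1 hbR
        have h02 : ((0 : ℤ), (0 : ℤ)) ∈ I2 := h2.zero
        rw [show i - x.1 = 0 by omega] at hb2 ⊢
        exact h2.colConv 0 0 (b - x.2) (c - x.2) h02 hb2 (by omega) (by omega)
    · have hja := shift_bounds h2 haR
      have hjb := good_bounds h1 hbL
      have hc : c = x.2 := by omega
      have hi : i = x.1 := by omega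
      refine Finset.mem_union.2 (Or.inl ?_)
      rw [hc, hi]
      exact hxI1
    · refine Finset.mem_union.2 (Or.inr ?_)
      rw [mem_shift_iff]
      exact h2.colConv (i - x.1) (a - x.2) (b - x.2) (c - x.2)
        (mem_shift_iff.1 haR) (mem_shift_iff.1 hbR) (by omega) (by omega)
  case rowNE =>
    intro j hj1 hj2
    simp only at hj2
    by_cases hj : j ≤ x.2
    · obtain ⟨i, hi⟩ := h1.rowNE j hj1 hj
      exact ⟨i, Finset.mem_union.2 (Or.inl hi)⟩
    · obtain ⟨i, hi⟩ := h2.rowNE (j - x.2) (by omega) (by omega)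
      refine ⟨i + x.1, Finset.mem_union.2 (Or.inr ?_)⟩
      rw [mem_shift_iff]
      have he : ((i + x.1 - x.1, j - x.2) : Pt) = ((i, j - x.2) : Pt) := by
        rw [Prod.ext_iff]; constructor <;> simp
      rw [he]; exact hi
  case colNE =>
    intro i hi1 hi2
    simp only at hi2
    by_cases hi : i ≤ x.1
    · obtain ⟨j, hj⟩ := h1.colNE i hi1 hi
      exact ⟨j, Finset.mem_union.2 (Or.inl hj)⟩
    · obtain ⟨j, hj⟩ := h2.colNE (i - x.1) (by omega) (by omega)
      refine ⟨j + x.2, Finset.mem_union.2 (Or.inr ?_)⟩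
      rw [mem_shift_iff]
      have he : ((i - x.1, j + x.2 - x.2) : Pt) = ((i - x.1, j) : Pt) := by
        rw [Prod.ext_iff]; constructor <;> simp
      rw [he]; exact hj
  case overlapV =>
    intro j hj1 hj2
    simp only at hj2
    rcases lt_trichotomy j x.2 with hj | hj | hj
    · obtain ⟨i, hi1, hi2⟩ := h1.overlapV j hj1 hj
      exact ⟨i, Finset.mem_union.2 (Or.inl hi1), Finset.mem_union.2 (Or.inl hi2)⟩
    · obtain ⟨i, hi1, hi2⟩ := h2.overlapV 0 le_rfl (by omega)
      refine ⟨i + x.1, Finset.mem_union.2 (Or.inr ?_), Finset.mem_union.2 (Or.inr ?_)⟩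
      · rw [mem_shift_iff]
        have he : ((i + x.1 - x.1, j - x.2) : Pt) = ((i, 0) : Pt) := by
          rw [Prod.ext_iff]; constructor <;> simp <;> omega
        rw [he]; exact hi1
      · rw [mem_shift_iff]
        have he : ((i + x.1 - x.1, j + 1 - x.2) : Pt) = ((i, 1) : Pt) := by
          rw [Prod.ext_iff]; constructor <;> simp <;> omega
        rw [he]
        have : (0 : ℤ) + 1 = 1 := by ring
        rw [← this]; exact hi2
    · obtain ⟨i, hi1, hi2⟩ := h2.overlapV (j - x.2) (by omega) (by omega)
      refine ⟨i + x.1, Finset.mem_union.2 (Or.inr ?_), Finset.mem_union.2 (Or.inr ?_)⟩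
      · rw [mem_shift_iff]
        have he : ((i + x.1 - x.1, j - x.2) : Pt) = ((i, j - x.2) : Pt) := by
          rw [Prod.ext_iff]; constructor <;> simp
        rw [he]; exact hi1
      · rw [mem_shift_iff]
        have he : ((i + x.1 - x.1, j + 1 - x.2) : Pt) = ((i, (j - x.2) + 1) : Pt) := by
          rw [Prod.ext_iff]; constructor <;> simp <;> omega
        rw [he]; exact hi2

lemma glue_left {x y : Pt} {I1 I2 : Finset Pt} (h1 : Good x I1) (h2 : Good y I2) :
    (I1 ∪ shiftI x I2).filter (fun p => p.1 ≤ x.1 ∧ p.2 ≤ x.2) = I1 := by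
  ext p
  rw [Finset.mem_filter, Finset.mem_union]
  constructor
  · rintro ⟨hL | hR, hb1, hb2⟩
    · exact hL
    · rw [show p = ((p.1, p.2) : Pt) from (Prod.mk.eta).symm] at hR ⊢
      have := shift_bounds h2 hR
      have he : ((p.1, p.2) : Pt) = ((x.1, x.2) : Pt) := by
        rw [Prod.ext_iff]; constructor <;> simp <;> omega
      rw [he]
      rw [Prod.mk.eta]
      exact h1.xmem
  · intro hp
    have := h1.subset p hp
    exact ⟨Or.inl hp, this.2.1, this.2.2.2⟩

lemma glue_right {x y : Pt} {I1 I2 : Finset Pt} (h1 : Good x I1) (h2 : Good y I2) :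
    (I1 ∪ shiftI x I2).filter (fun p => x.1 ≤ p.1 ∧ x.2 ≤ p.2) = shiftI x I2 := by
  ext p
  rw [Finset.mem_filter, Finset.mem_union]
  constructor
  · rintro ⟨hL | hR, hb1, hb2⟩
    · have := h1.subset p hL
      rw [show p = ((p.1, p.2) : Pt) from (Prod.mk.eta).symm]
      rw [mem_shift_iff]
      have he : ((p.1 - x.1, p.2 - x.2) : Pt) = ((0, 0) : Pt) := by
        rw [Prod.ext_iff]; constructor <;> simp <;> omega
      rw [he]; exact h2.zero
    · exact hR
  · intro hp
    rw [show p = ((p.1, p.2) : Pt) from (Prod.mk.eta).symm] at hp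
    have := shift_bounds h2 hp
    rw [show p = ((p.1, p.2) : Pt) from (Prod.mk.eta).symm]
    exact ⟨Or.inr hp, by omega, by omega⟩

lemma shiftI_inj {v : Pt} {I I' : Finset Pt} (h : shiftI v I = shiftI v I') : I = I' := by
  ext q
  have key : ∀ J : Finset Pt, q ∈ J ↔ ((q.1 + v.1, q.2 + v.2) : Pt) ∈ shiftI v J := by
    intro J
    rw [mem_shift_iff]
    have he : ((q.1 + v.1 - v.1, q.2 + v.2 - v.2) : Pt) = q := by
      rw [Prod.ext_iff]; constructor <;> simp
    rw [he]
  rw [key I, key I', h]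

/-! ### Finiteness of `GammaN` -/

lemma gammaN_finite {x : Pt} (hx1 : 1 ≤ x.1) (hx2 : 1 ≤ x.2) :
    (GammaN {0, x} (normC x)).Finite := by
  have hsub : GammaN {0, x} (normC x) ⊆
      (fun I : Finset Pt => EB I) '' ((Finset.Icc ((0, 0) : Pt) x).powerset : Finset (Finset Pt)) := by
    intro γ hγ
    obtain ⟨I, hG, hE⟩ := gamma_structure hx1 hx2 hγ
    refine ⟨I, ?_, hE.symm⟩
    simp only [Finset.coe_powerset, Set.mem_preimage, Set.mem_powerset_iff]
    intro p hp
    have := hG.subset p (by exact_mod_cast hp)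
    simp only [Finset.coe_Icc, Set.mem_Icc]
    constructor <;> rw [Prod.le_def] <;> constructor
    · show (0:ℤ) ≤ p.1; omega
    · show (0:ℤ) ≤ p.2; omega
    · omega
    · omega
  exact Set.Finite.subset (Set.Finite.image _ (Finset.finite_toSet _)) hsub

end BetaSuper

open BetaSuper

/-- For a fixed positive integer `ρ`, the sequence
`α_n = β_{(n, ρn)}` is supermultiplicative: `α_{n+m} ≥ α_n ⬝ α_m`. -/
theorem betaX_supermultiplicative (ρ : ℕ) (hρ : 1 ≤ ρ)
    (n m : ℕ) (hn : 1 ≤ n) (hm : 1 ≤ m) :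
    betaX ((n : ℤ), ((ρ * n : ℕ) : ℤ)) * betaX ((m : ℤ), ((ρ * m : ℕ) : ℤ)) ≤
      betaX (((n + m : ℕ) : ℤ), ((ρ * (n + m) : ℕ) : ℤ)) := by
  classical
  set x : Pt := ((n : ℤ), ((ρ * n : ℕ) : ℤ)) with hxdef
  set y : Pt := ((m : ℤ), ((ρ * m : ℕ) : ℤ)) with hydef
  set z : Pt := (((n + m : ℕ) : ℤ), ((ρ * (n + m) : ℕ) : ℤ)) with hzdef
  have hx1 : 1 ≤ x.1 := by show (1 : ℤ) ≤ (n : ℤ); exact_mod_cast hn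
  have hx2 : 1 ≤ x.2 := by
    show (1 : ℤ) ≤ ((ρ * n : ℕ) : ℤ)
    have : 1 ≤ ρ * n := Nat.one_le_iff_ne_zero.2 (Nat.mul_ne_zero (by omega) (by omega))
    exact_mod_cast this
  have hy1 : 1 ≤ y.1 := by show (1 : ℤ) ≤ (m : ℤ); exact_mod_cast hm
  have hy2 : 1 ≤ y.2 := by
    show (1 : ℤ) ≤ ((ρ * m : ℕ) : ℤ)
    have : 1 ≤ ρ * m := Nat.one_le_iff_ne_zero.2 (Nat.mul_ne_zero (by omega) (by omega))
    exact_mod_cast this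
  have hz1 : 1 ≤ z.1 := by show (1 : ℤ) ≤ ((n + m : ℕ) : ℤ); exact_mod_cast Nat.le_add_right_of_le hn
  have hz2 : 1 ≤ z.2 := by
    show (1 : ℤ) ≤ ((ρ * (n + m) : ℕ) : ℤ)
    have : 1 ≤ ρ * (n + m) := Nat.one_le_iff_ne_zero.2 (Nat.mul_ne_zero (by omega) (by omega))
    exact_mod_cast this
  have hzx1 : z.1 = x.1 + y.1 := by
    show ((n + m : ℕ) : ℤ) = ((n : ℕ) : ℤ) + ((m : ℕ) : ℤ); push_cast; ring
  have hzx2 : z.2 = x.2 + y.2 := by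
    show ((ρ * (n + m) : ℕ) : ℤ) = ((ρ * n : ℕ) : ℤ) + ((ρ * m : ℕ) : ℤ); push_cast; ring
  show Nat.card ↥(GammaN {0, x} (normC x)) * Nat.card ↥(GammaN {0, y} (normC y)) ≤
    Nat.card ↥(GammaN {0, z} (normC z))
  have hfinz := gammaN_finite hz1 hz2
  haveI : Finite ↥(GammaN {0, z} (normC z)) := hfinz.to_subtype
  choose Ix hIxg hIxe using fun γ : ↥(GammaN {0, x} (normC x)) => gamma_structure hx1 hx2 γ.2
  choose Iy hIyg hIye using fun γ : ↥(GammaN {0, y} (normC y)) => gamma_structure hy1 hy2 γ.2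
  have hJg : ∀ p : ↥(GammaN {0, x} (normC x)) × ↥(GammaN {0, y} (normC y)),
      Good z (Ix p.1 ∪ shiftI x (Iy p.2)) := by
    intro p
    have hg := good_glue (hIxg p.1) (hIyg p.2)
    have he : ((x.1 + y.1, x.2 + y.2) : Pt) = z := by
      rw [Prod.ext_iff]; exact ⟨hzx1.symm, hzx2.symm⟩
    rwa [he] at hg
  set F : ↥(GammaN {0, x} (normC x)) × ↥(GammaN {0, y} (normC y)) →
      ↥(GammaN {0, z} (normC z)) :=
    fun p => ⟨EB (Ix p.1 ∪ shiftI x (Iy p.2)), good_mem_gamma (hJg p)⟩ with hFdef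
  have hFinj : Function.Injective F := by
    intro p q hpq
    have hEBeq : EB (Ix p.1 ∪ shiftI x (Iy p.2)) = EB (Ix q.1 ∪ shiftI x (Iy q.2)) := by
      have := congrArg Subtype.val hpq
      simpa [hFdef] using this
    have hJeq : Ix p.1 ∪ shiftI x (Iy p.2) = Ix q.1 ∪ shiftI x (Iy q.2) :=
      EB_inj (hJg p) (hJg q) hEBeq
    have hI1 : Ix p.1 = Ix q.1 := by
      rw [← glue_left (hIxg p.1) (hIyg p.2), ← glue_left (hIxg q.1) (hIyg q.2), hJeq]
    have hI2 : Iy p.2 = Iy q.2 := by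
      apply shiftI_inj (v := x)
      rw [← glue_right (hIxg p.1) (hIyg p.2), ← glue_right (hIxg q.1) (hIyg q.2), hJeq]
    have h1 : p.1 = q.1 := Subtype.ext (by rw [hIxe p.1, hIxe q.1, hI1])
    have h2 : p.2 = q.2 := Subtype.ext (by rw [hIye p.2, hIye q.2, hI2])
    exact Prod.ext h1 h2
  calc Nat.card ↥(GammaN {0, x} (normC x)) * Nat.card ↥(GammaN {0, y} (normC y))
      = Nat.card (↥(GammaN {0, x} (normC x)) × ↥(GammaN {0, y} (normC y))) :=
        (Nat.card_prod _ _).symm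
    _ ≤ Nat.card ↥(GammaN {0, z} (normC z)) := Nat.card_le_card_of_injective F hFinj
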